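/- arXiv:1506.03944 — 2 statements merged into one kernel-verified Lean document; each statement's English description precedes it below -/
import Mathlib

section
/- Let ∅ ≠ V ⊊ [n] and let Σ = (x_0,…,x_m) be the elements of [n]∖V taken in an arbitrary order. Then the standard matching M_Σ restricts to a perfect matching of the graph Γ_n(V): for every vertex σ of Γ_n(V), level(σ,Σ) is defined and M_Σ(σ) is again a vertex of Γ_n(V). -/
open Finset

/-- union of a list of finsets -/
def lunion {α : Type*} [DecidableEq α] (L : List (Finset α)) : Finset α := L.foldr (· ∪ ·) ∅

/-- `IsOSP A L` : `L` is an ordered set partition of the finite set `A`. -/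
def IsOSP {α : Type*} [DecidableEq α] (A : Finset α) (L : List (Finset α)) : Prop :=
  (∀ B ∈ L, B.Nonempty) ∧ L.Pairwise (fun B C => Disjoint B C) ∧ lunion L = A

/-- `seenBlk L x` = `A_1 ∪ … ∪ A_{i(x)}`, the union of the blocks of `L` up to and
including the block containing `x`. -/
def seenBlk {α : Type*} [DecidableEq α] : List (Finset α) → α → Finset α
  | [], _ => ∅
  | A :: rest, x => if x ∈ A then A else A ∪ seenBlk rest x

/-- rank (1-based position in the increasing order) of `x` in the finset `S`. -/
def rankIn (S : Finset ℕ) (x : ℕ) : ℕ := (S.filter (fun y => y ≤ x)).card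

/-- the set `F(σ)` of flippable colors, for an ordered set partition of `[n] = {0,…,n}` -/
def Fset (n : ℕ) (L : List (Finset ℕ)) : Finset ℕ :=
  match L.getLast? with
  | some A => if A.card = 1 then Finset.range (n+1) \ A else Finset.range (n+1)
  | none => Finset.range (n+1)

/-- the flip `F(σ,x)` of an ordered set partition with respect to the color `x` -/
def flipOSP (x : ℕ) : List (Finset ℕ) → List (Finset ℕ)
  | [] => []
  | A :: rest =>
    if x ∈ A then
      if 2 ≤ A.card then {x} :: A.erase x :: rest
      else
        match rest with
        | [] => [A]
        | B :: rest' => insert x B :: rest'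
    else A :: flipOSP x rest

def levelAux : List ℕ → List (Finset ℕ) → Option ℕ
  | [], _ => none
  | _ :: _, [] => none
  | x :: xs, A :: As => if A = {x} then levelAux xs As else some x

/-- `levelFn Σ σ` = `level(σ,Σ)` (as an `Option`; `none` = undefined). -/
def levelFn (Sig : List ℕ) (L : List (Finset ℕ)) : Option ℕ :=
  levelAux Sig.reverse L.reverse

/-- ordered set partitions of `[n] = {0,…,n}` -/
def OSPn (n : ℕ) : Type := {L : List (Finset ℕ) // IsOSP (Finset.range (n+1)) L}

/-- the graph `Γ_n`: vertices are the ordered set partitions of `[n]`, with `σ` and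
`F(σ,x)` joined by an edge for every `x ∈ F(σ)`. -/
def Gamma (n : ℕ) : SimpleGraph (OSPn n) where
  Adj σ τ := σ ≠ τ ∧
    ((∃ x ∈ Fset n σ.1, τ.1 = flipOSP x σ.1) ∨ (∃ x ∈ Fset n τ.1, σ.1 = flipOSP x τ.1))
  symm := ⟨fun σ τ h => ⟨h.1.symm, h.2.symm⟩⟩
  loopless := ⟨fun σ h => h.1 rfl⟩

/-- a matching: a set of edges of `G`, no two of which share a vertex -/
def IsMatchingSet {V : Type*} (G : SimpleGraph V) (M : Set (Sym2 V)) : Prop :=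
  (∀ e ∈ M, e ∈ G.edgeSet) ∧ ∀ e ∈ M, ∀ f ∈ M, ∀ v : V, v ∈ e → v ∈ f → e = f

/-- a vertex is critical w.r.t. `M` if it lies in no edge of `M` -/
def CriticalVx {V : Type*} (M : Set (Sym2 V)) (v : V) : Prop := ∀ e ∈ M, v ∉ e

/-- the standard matching `M_Σ`, as a set of edges of `Γ_n` -/
def MSigma (n : ℕ) (Sig : List ℕ) : Set (Sym2 (OSPn n)) :=
  {e | ∃ σ τ : OSPn n, ∃ x, levelFn Sig σ.1 = some x ∧ τ.1 = flipOSP x σ.1 ∧ e = s(σ, τ)}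

/-- a list of edges is alternating w.r.t. `M` -/
def Alternates {V : Type*} (M : Set (Sym2 V)) (es : List (Sym2 V)) : Prop :=
  es.Chain' (fun e f => e ∈ M ↔ f ∉ M)

def IsProperlyAlternating {V : Type*} {G : SimpleGraph V} (M : Set (Sym2 V)) {u v : V}
    (p : G.Walk u v) : Prop :=
  Alternates M p.edges ∧
  (∀ e, p.edges.head? = some e → e ∉ M → CriticalVx M u) ∧
  (∀ e, p.edges.getLast? = some e → e ∉ M → CriticalVx M v)

def IsSemiAugmenting {V : Type*} {G : SimpleGraph V} (M : Set (Sym2 V)) {u v : V}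
    (p : G.Walk u v) : Prop :=
  IsProperlyAlternating M p ∧
  (∃ e, p.edges.head? = some e ∧ e ∈ M) ∧ (∃ e, p.edges.getLast? = some e ∧ e ∉ M)

def IsNonAugmenting {V : Type*} {G : SimpleGraph V} (M : Set (Sym2 V)) {u v : V}
    (p : G.Walk u v) : Prop :=
  Alternates M p.edges ∧
  (∃ e, p.edges.head? = some e ∧ e ∈ M) ∧ (∃ e, p.edges.getLast? = some e ∧ e ∈ M)

def IsWeaklySemiAugmenting {V : Type*} {G : SimpleGraph V} (M : Set (Sym2 V)) {u v : V}
    (p : G.Walk u v) : Prop :=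
  Alternates M p.edges ∧
  (p.edges = [] ∨
    ((∃ e, p.edges.head? = some e ∧ e ∈ M) ∧ (∃ e, p.edges.getLast? = some e ∧ e ∉ M)))

/-- a partial ordered set partition, as a list of pairs of blocks `(A_i, B_i)` -/
abbrev RawPOSP := List (Finset ℕ × Finset ℕ)

def carrierP (σ : RawPOSP) : Finset ℕ := (σ.map Prod.fst).foldr (· ∪ ·) ∅
def colorsP (σ : RawPOSP) : Finset ℕ := (σ.map Prod.snd).foldr (· ∪ ·) ∅

/-- `σ` is a partial ordered set partition of `[n] = {0,…,n}` -/
def IsPOSP (n : ℕ) (σ : RawPOSP) : Prop :=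
  σ ≠ [] ∧ (∀ p ∈ σ, p.2.Nonempty ∧ p.2 ⊆ p.1 ∧ p.1 ⊆ Finset.range (n+1)) ∧
  (σ.map Prod.fst).Pairwise (fun A B => Disjoint A B)

/-- view an ordered set partition as a partial one, with `B_i = A_i` -/
def toPairs (L : List (Finset ℕ)) : RawPOSP := L.map (fun A => (A, A))

def dlAux (S : Finset ℕ) : Finset ℕ → RawPOSP → RawPOSP
  | _, [] => []
  | acc, (A, B) :: rest =>
    if B ⊆ S then dlAux S (acc ∪ A) rest
    else (acc ∪ A, B \ S) :: dlAux S ∅ rest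

/-- the deletion `dl(σ, S)` -/
def dl (σ : RawPOSP) (S : Finset ℕ) : RawPOSP := dlAux S ∅ σ

/-- `D(σ, S)` = `A_i ∪ … ∪ A_t` for the minimal `i` with `B_i ∪ … ∪ B_t ⊆ S`, else `∅` -/
def Dfun (S : Finset ℕ) : RawPOSP → Finset ℕ
  | [] => ∅
  | b :: rest => if colorsP (b :: rest) ⊆ S then carrierP (b :: rest) else Dfun S rest

def nodesAux : Finset ℕ → RawPOSP → Finset (Finset ℕ × ℕ)
  | _, [] => ∅
  | acc, (A, B) :: rest => B.image (fun x => (acc ∪ A, x)) ∪ nodesAux (acc ∪ A) rest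

/-- the node set `V(σ)` of a partial ordered set partition -/
def nodesP (σ : RawPOSP) : Finset (Finset ℕ × ℕ) := nodesAux ∅ σ

/-- an ordered set partition of the whole of `[n]`, viewed as a partial one -/
def IsFullOSP (n : ℕ) (σ : RawPOSP) : Prop :=
  IsPOSP n σ ∧ carrierP σ = Finset.range (n+1) ∧ ∀ p ∈ σ, p.2 = p.1

/-- simplices of the standard chromatic subdivision `χ(Δⁿ)` -/
def IsSimplexChi (n : ℕ) (W : Finset (Finset ℕ × ℕ)) : Prop :=
  ∃ σ : RawPOSP, IsFullOSP n σ ∧ W ⊆ nodesP σ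

/-- a linked tuple of partial ordered set partitions -/
def Linked (T : List RawPOSP) : Prop := T.Chain' (fun σ τ => colorsP σ = carrierP τ)

/-- vertices of `χ^d(Δⁿ)`: linked `d`-tuples whose last entry has a singleton color set -/
def IsVertexChi (n d : ℕ) (v : List RawPOSP) : Prop :=
  v.length = d ∧ (∀ σ ∈ v, IsPOSP n σ) ∧ Linked v ∧ (colorsP (v.getLastD [])).card = 1

/-- the `n`-simplices of `χ^d(Δⁿ)`: linked `d`-tuples of ordered set partitions of `[n]` -/
def IsTopSimplexChi (n d : ℕ) (T : List RawPOSP) : Prop :=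
  T.length = d ∧ Linked T ∧
  ∀ σ ∈ T, IsPOSP n σ ∧ carrierP σ = Finset.range (n+1) ∧ ∀ p ∈ σ, p.2 = p.1

def faceAux : Finset ℕ → List RawPOSP → List RawPOSP
  | _, [] => []
  | S, σ :: rest => dl σ S :: faceAux (Dfun S σ) rest

/-- the face of the simplex `T` of `χ^d(Δⁿ)` determined by `S_d = S`:
`(dl(σ_1,S_1),…,dl(σ_d,S_d))` with `S_i = D(σ_{i+1},S_{i+1})`. -/
def faceT (T : List RawPOSP) (S : Finset ℕ) : List RawPOSP := (faceAux S T.reverse).reverse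

/-- the vertex of the `n`-simplex `T` colored `x` -/
def vertexOf (T : List RawPOSP) (x : ℕ) : List RawPOSP :=
  faceT T ((colorsP (T.getLastD [])) \ {x})

/-- relabel all elements by `f` -/
def relabel (f : ℕ → ℕ) (T : List RawPOSP) : List RawPOSP :=
  T.map (fun σ => σ.map (fun p => (p.1.image f, p.2.image f)))

/-- the unique order preserving bijection `I → J` (extended by the identity) -/
noncomputable def oMap (I J : Finset ℕ) (h : I.card = J.card) (x : ℕ) : ℕ :=
  if hx : x ∈ I then ((J.orderIsoOfFin h.symm) ((I.orderIsoOfFin rfl).symm ⟨x, hx⟩) : ℕ)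
  else x

/-- a compliant binary labeling of the vertices of `χ^d(Δⁿ)` -/
def Compliant (n d : ℕ) (lab : List RawPOSP → Bool) : Prop :=
  ∀ I J : Finset ℕ, I ⊆ Finset.range (n+1) → J ⊆ Finset.range (n+1) →
    ∀ h : I.card = J.card, ∀ v : List RawPOSP, IsVertexChi n d v →
      carrierP v.headI ⊆ I → lab (relabel (oMap I J h) v) = lab v

/-- the number of ordered set partitions of `[n] = {0,…,n}` -/
noncomputable def fOSP (n : ℕ) : ℕ :=
  Nat.card {L : List (Finset ℕ) // IsOSP (Finset.range (n+1)) L}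

/-- membership in the vertex set of `Γ_n(V)` -/
def InGammaV (V : Finset ℕ) (L : List (Finset ℕ)) : Prop :=
  ∃ A rest, L = A :: rest ∧ ¬ A ⊆ V

/-- a prefix in `V`: a tuple of nonempty pairwise disjoint subsets of `V` -/
def IsPrefixIn {α : Type*} [DecidableEq α] (V : Finset α) (P : List (Finset α)) : Prop :=
  (∀ A ∈ P, A.Nonempty ∧ A ⊆ V) ∧ P.Pairwise (fun A B => Disjoint A B)

/-- membership in the vertex set of `Γ_n(V,𝒜)` -/
def InGammaVA (V : Finset ℕ) (P : List (Finset ℕ)) (L : List (Finset ℕ)) : Prop :=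
  ∃ A rest, L = P ++ A :: rest ∧ ¬ A ⊆ V

/-- conducting bipartite graph of the first type -/
def ConductingFirst {V : Type*} (G : SimpleGraph V) (A B : Set V) : Prop :=
  A.ncard = B.ncard + 1 ∧
  ∀ v ∈ A, ∃ M : Set (Sym2 V), IsMatchingSet G M ∧ ∀ u, CriticalVx M u ↔ u = v

/-- conducting bipartite graph of the second type -/
def ConductingSecond {V : Type*} (G : SimpleGraph V) (A B : Set V) : Prop :=
  A.ncard = B.ncard ∧
  ∀ v ∈ A, ∀ w ∈ B, ∃ M : Set (Sym2 V), IsMatchingSet G M ∧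
    ∀ u, CriticalVx M u ↔ (u = v ∨ u = w)

/-- the vertex of the `n`-simplex `(As ‖ Bs)` of `χ²(Δⁿ)` colored `x` is internal -/
def InternalVx (n : ℕ) (As Bs : List (Finset ℕ)) (x : ℕ) : Prop :=
  carrierP (dl (toPairs As) (Finset.range (n+1) \ seenBlk Bs x)) = Finset.range (n+1)

section Aux

lemma lunion_cons {α : Type*} [DecidableEq α] (A : Finset α) (L : List (Finset α)) :
    lunion (A :: L) = A ∪ lunion L := rfl

lemma subset_lunion {α : Type*} [DecidableEq α] {B : Finset α} {L : List (Finset α)}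
    (h : B ∈ L) : B ⊆ lunion L := by
  induction L with
  | nil => simp at h
  | cons A t ih =>
    rcases List.mem_cons.mp h with h | h
    · subst h; exact Finset.subset_union_left
    · exact (ih h).trans Finset.subset_union_right

lemma disjoint_lunion {α : Type*} [DecidableEq α] {A : Finset α} {L : List (Finset α)}
    (h : ∀ C ∈ L, Disjoint A C) : Disjoint A (lunion L) := by
  induction L with
  | nil => simp [lunion]
  | cons B t ih =>
    rw [lunion_cons, Finset.disjoint_union_right]
    exact ⟨h B (by simp), ih fun C hC => h C (by simp [hC])⟩

lemma lunion_append {α : Type*} [DecidableEq α] (s t : List (Finset α)) :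
    lunion (s ++ t) = lunion s ∪ lunion t := by
  induction s with
  | nil => simp [lunion]
  | cons A r ih => simp [lunion_cons, ih, Finset.union_assoc]

lemma mem_lunion_map_singleton {l : List ℕ} {a : ℕ} :
    a ∈ lunion (l.map (fun y => ({y} : Finset ℕ))) ↔ a ∈ l := by
  induction l with
  | nil => simp [lunion]
  | cons x r ih => simp [lunion_cons, ih]

lemma eq_singleton_of_card_lt {A : Finset ℕ} {x : ℕ} (hx : x ∈ A) (h : ¬ 2 ≤ A.card) :
    A = {x} := by
  have h1 : A.card ≤ 1 := by omega
  have h2 : 1 ≤ A.card := Finset.one_le_card.mpr ⟨x, hx⟩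
  obtain ⟨y, hy⟩ := Finset.card_eq_one.mp (le_antisymm h1 h2)
  subst hy
  obtain rfl : x = y := by simpa using hx
  rfl

lemma lunion_flip (x : ℕ) (L : List (Finset ℕ)) : lunion (flipOSP x L) = lunion L := by
  induction L with
  | nil => rfl
  | cons A rest ih =>
    by_cases hxA : x ∈ A
    · by_cases hc : 2 ≤ A.card
      · simp only [flipOSP, if_pos hxA, if_pos hc, lunion_cons, ← Finset.union_assoc]
        congr 1
        rw [← Finset.insert_eq, Finset.insert_erase hxA]
      · have hA : A = {x} := eq_singleton_of_card_lt hxA hc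
        cases rest with
        | nil => simp [flipOSP, if_pos hxA, if_neg hc]
        | cons B r =>
          simp only [flipOSP, if_pos hxA, if_neg hc, lunion_cons]
          rw [hA, Finset.insert_eq, Finset.union_assoc]
    · simp only [flipOSP, if_neg hxA, lunion_cons, ih]

lemma nonempty_flip (x : ℕ) (L : List (Finset ℕ)) (h : ∀ B ∈ L, B.Nonempty) :
    ∀ B ∈ flipOSP x L, B.Nonempty := by
  induction L with
  | nil => simpa [flipOSP] using h
  | cons A rest ih =>
    have hrest : ∀ B ∈ rest, B.Nonempty := fun B hB => h B (by simp [hB])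
    by_cases hxA : x ∈ A
    · by_cases hc : 2 ≤ A.card
      · simp only [flipOSP, if_pos hxA, if_pos hc]
        intro B hB
        rcases List.mem_cons.mp hB with h1 | hB
        · subst h1; simp
        rcases List.mem_cons.mp hB with h1 | hB
        · subst h1
          rw [← Finset.card_pos, Finset.card_erase_of_mem hxA]
          omega
        · exact hrest B hB
      · cases rest with
        | nil =>
          simp only [flipOSP, if_pos hxA, if_neg hc]
          intro B hB
          simp only [List.mem_singleton] at hB
          subst hB; exact ⟨x, hxA⟩
        | cons C r =>
          simp only [flipOSP, if_pos hxA, if_neg hc]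
          intro B hB
          rcases List.mem_cons.mp hB with h1 | hB
          · subst h1; exact ⟨x, by simp⟩
          · exact hrest B (by simp [hB])
    · simp only [flipOSP, if_neg hxA]
      intro B hB
      rcases List.mem_cons.mp hB with h1 | hB
      · subst h1; exact h _ List.mem_cons_self
      · exact ih hrest B hB

lemma pairwise_flip (x : ℕ) (L : List (Finset ℕ))
    (h : L.Pairwise (fun B C => Disjoint B C)) :
    (flipOSP x L).Pairwise (fun B C => Disjoint B C) := by
  induction L with
  | nil => simpa [flipOSP] using h
  | cons A rest ih =>
    rw [List.pairwise_cons] at h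
    obtain ⟨hA, hrest⟩ := h
    by_cases hxA : x ∈ A
    · by_cases hc : 2 ≤ A.card
      · simp only [flipOSP, if_pos hxA, if_pos hc]
        refine List.Pairwise.cons ?_ (List.Pairwise.cons ?_ hrest)
        · intro C hC
          rcases List.mem_cons.mp hC with h1 | hC
          · subst h1; simp
          · exact Finset.disjoint_singleton_left.mpr
              (Finset.disjoint_left.mp (hA C hC) hxA)
        · intro C hC
          exact Finset.disjoint_of_subset_left (Finset.erase_subset x A) (hA C hC)
      · cases rest with
        | nil => simp [flipOSP, if_pos hxA, if_neg hc]
        | cons B r =>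
          simp only [flipOSP, if_pos hxA, if_neg hc]
          rw [List.pairwise_cons] at hrest
          refine List.Pairwise.cons ?_ hrest.2
          intro C hC
          rw [Finset.insert_eq, Finset.disjoint_union_left]
          refine ⟨Finset.disjoint_singleton_left.mpr
            (Finset.disjoint_left.mp (hA C (by simp [hC])) hxA), hrest.1 C hC⟩
    · simp only [flipOSP, if_neg hxA]
      refine List.Pairwise.cons ?_ (ih hrest)
      intro C hC
      have hCsub : C ⊆ lunion rest := (lunion_flip x rest) ▸ subset_lunion hC
      exact Finset.disjoint_of_subset_right hCsub (disjoint_lunion hA)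

lemma isOSP_flip {S : Finset ℕ} {L : List (Finset ℕ)} (x : ℕ) (h : IsOSP S L) :
    IsOSP S (flipOSP x L) :=
  ⟨nonempty_flip x L h.1, pairwise_flip x L h.2.1, (lunion_flip x L).trans h.2.2⟩

lemma levelAux_some_mem : ∀ (xs : List ℕ) (Ls : List (Finset ℕ)) (x : ℕ),
    levelAux xs Ls = some x → x ∈ xs
  | [], _, _, h => by simp [levelAux] at h
  | _ :: _, [], _, h => by simp [levelAux] at h
  | y :: xs, A :: As, x, h => by
    by_cases hA : A = {y}
    · simp only [levelAux, if_pos hA] at h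
      exact List.mem_cons.mpr (Or.inr (levelAux_some_mem xs As x h))
    · simp only [levelAux, if_neg hA, Option.some.injEq] at h
      subst h; simp

lemma levelAux_none : ∀ (xs : List ℕ) (Ls : List (Finset ℕ)),
    levelAux xs Ls = none →
      (xs.map (fun y => ({y} : Finset ℕ))) <+: Ls ∨
        Ls <+: (xs.map (fun y => ({y} : Finset ℕ)))
  | [], Ls, _ => Or.inl ⟨Ls, by simp⟩
  | _ :: _, [], _ => Or.inr ⟨_, rfl⟩
  | y :: xs, A :: As, h => by
    by_cases hA : A = {y}
    · simp only [levelAux, if_pos hA] at h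
      subst hA
      rcases levelAux_none xs As h with ⟨t, ht⟩ | ⟨t, ht⟩
      · exact Or.inl ⟨t, by simp [← ht]⟩
      · exact Or.inr ⟨t, by simp [← ht]⟩
    · simp [levelAux, if_neg hA] at h

end Aux


/-- For `∅ ≠ V ⊊ [n]` and `Σ` an ordering of `[n]∖V`, the standard matching `M_Σ`
restricts to a perfect matching of `Γ_n(V)`: for every vertex `σ` of `Γ_n(V)`,
`level(σ,Σ)` is defined and `M_Σ(σ)` is again a vertex of `Γ_n(V)`. -/
theorem statement12 (n : ℕ) (V : Finset ℕ) (hne : V.Nonempty)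
    (hV : V ⊂ Finset.range (n + 1))
    (Sig : List ℕ) (hnd : Sig.Nodup)
    (hmem : ∀ y, y ∈ Sig ↔ y ∈ Finset.range (n + 1) \ V) :
    ∀ σ : OSPn n, InGammaV V σ.1 →
      ∃ x, levelFn Sig σ.1 = some x ∧
        InGammaV V (flipOSP x σ.1) ∧
        ∃ τ : OSPn n, τ.1 = flipOSP x σ.1 ∧ s(σ, τ) ∈ MSigma n Sig := by
  intro σ hσ
  obtain ⟨A, rest, hcons, hAV⟩ := hσ
  obtain ⟨hnon, hpw, hlu⟩ := σ.2
  obtain ⟨v, hv⟩ := hne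
  have hvr : v ∈ Finset.range (n + 1) := hV.subset hv
  -- level is defined
  have hlev : ∃ x, levelFn Sig σ.1 = some x := by
    cases hlv : levelFn Sig σ.1 with
    | some x => exact ⟨x, rfl⟩
    | none =>
      exfalso
      unfold levelFn at hlv
      rcases levelAux_none _ _ hlv with ⟨t, ht⟩ | ⟨t, ht⟩
      · -- map singleton Sig.reverse ++ t = σ.1.reverse
        have hσ1 : σ.1 = t.reverse ++ Sig.map (fun y => ({y} : Finset ℕ)) := by
          have := congrArg List.reverse ht
          simpa [List.map_reverse] using this.symm
        cases htr : t.reverse with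
        | nil =>
          rw [htr, List.nil_append] at hσ1
          have : v ∈ lunion σ.1 := hlu.symm ▸ hvr
          rw [hσ1, mem_lunion_map_singleton] at this
          exact (Finset.mem_sdiff.mp ((hmem v).mp this)).2 hv
        | cons A' t' =>
          rw [htr] at hσ1
          rw [hcons] at hσ1
          simp only [List.cons_append, List.cons.injEq] at hσ1
          obtain ⟨hAA', hrest'⟩ := hσ1
          -- A not subset V: get a ∈ A, a ∉ V
          obtain ⟨a, haA, haV⟩ := Finset.not_subset.mp hAV
          have har : a ∈ Finset.range (n + 1) := by
            have : a ∈ lunion σ.1 := subset_lunion (by rw [hcons]; simp) haA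
            rwa [hlu] at this
          have haSig : a ∈ Sig := (hmem a).mpr (Finset.mem_sdiff.mpr ⟨har, haV⟩)
          have hmemblk : ({a} : Finset ℕ) ∈ t' ++ Sig.map (fun y => ({y} : Finset ℕ)) := by
            simp only [List.mem_append, List.mem_map]
            exact Or.inr ⟨a, haSig, rfl⟩
          have hpw' := hpw
          rw [hcons, hrest', List.pairwise_cons] at hpw'
          have := hpw'.1 _ hmemblk
          exact (Finset.disjoint_left.mp this haA) (Finset.mem_singleton_self a)
      · -- σ.1.reverse is prefix of map singleton Sig.reverse
        have hσ1 : Sig.map (fun y => ({y} : Finset ℕ)) = t.reverse ++ σ.1 := by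
          have := congrArg List.reverse ht
          simpa [List.map_reverse] using this.symm
        have hsub : lunion σ.1 ⊆ lunion (Sig.map (fun y => ({y} : Finset ℕ))) := by
          rw [hσ1, lunion_append]; exact Finset.subset_union_right
        have : v ∈ lunion (Sig.map (fun y => ({y} : Finset ℕ))) := hsub (hlu.symm ▸ hvr)
        rw [mem_lunion_map_singleton] at this
        exact (Finset.mem_sdiff.mp ((hmem v).mp this)).2 hv
  obtain ⟨x, hx⟩ := hlev
  have hxSig : x ∈ Sig := by
    have := levelAux_some_mem _ _ _ hx
    simpa using this
  have hxV : x ∉ V := (Finset.mem_sdiff.mp ((hmem x).mp hxSig)).2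
  refine ⟨x, hx, ?_, ?_⟩
  · -- InGammaV of the flip
    rw [hcons]
    by_cases hxA : x ∈ A
    · by_cases hc : 2 ≤ A.card
      · refine ⟨{x}, A.erase x :: rest, by simp [flipOSP, hxA, hc], ?_⟩
        simp [Finset.singleton_subset_iff, hxV]
      · cases rest with
        | nil => exact ⟨A, [], by simp [flipOSP, hxA, hc], hAV⟩
        | cons B r =>
          refine ⟨insert x B, r, by simp [flipOSP, hxA, hc], ?_⟩
          intro hsub
          exact hxV (hsub (Finset.mem_insert_self x B))
    · exact ⟨A, flipOSP x rest, by simp [flipOSP, hxA], hAV⟩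
  · refine ⟨⟨flipOSP x σ.1, isOSP_flip x σ.2⟩, rfl, ?_⟩
    exact ⟨σ, ⟨flipOSP x σ.1, isOSP_flip x σ.2⟩, x, hx, rfl, rfl⟩
end

section
/- Let G be a bipartite graph with bipartition (A,B). (1) If M is a near-perfect matching of G with critical vertex v ∈ A such that for every other vertex w ∈ A there exists a semi-augmenting path from v to w, then G is conducting of the first type. (2) If M is a perfect matching of G such that for all vertices v ∈ A and w ∈ B there exists a non-augmenting path from v to w, then G is conducting of the second type. -/
open Finset

section Statement16Aux

open SimpleGraph

variable {V : Type*} {G : SimpleGraph V}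

private lemma alt_congr {M M' : Set (Sym2 V)} :
    ∀ {l : List (Sym2 V)}, Alternates M l → (∀ f ∈ l, (f ∈ M ↔ f ∈ M')) → Alternates M' l := by
  intro l
  induction l with
  | nil => intro _ _; exact List.isChain_nil
  | cons a t ih =>
    intro h hmem
    cases t with
    | nil => exact List.isChain_singleton a
    | cons b t' =>
      have h' := List.isChain_cons_cons.mp h
      refine List.isChain_cons_cons.mpr ⟨?_, ih h'.2 (fun f hf => hmem f (List.mem_cons_of_mem _ hf))⟩
      have ha := hmem a (by simp)
      have hb := hmem b (by simp)
      have := h'.1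
      tauto

private lemma mem_of_getLast?' {α : Type*} {l : List α} {x : α} (h : l.getLast? = some x) :
    x ∈ l := by
  have hne : l ≠ [] := by rintro rfl; simp at h
  rw [List.getLast?_eq_getLast_of_ne_nil hne] at h
  exact (Option.some_inj.mp h) ▸ List.getLast_mem hne

private lemma alt_even' {M : Set (Sym2 V)} {l : List (Sym2 V)} (h : Alternates M l)
    {e₀ : Sym2 V} (h0 : l[0]? = some e₀) (hM : e₀ ∈ M) :
    ∀ (i : ℕ) (e : Sym2 V), l[i]? = some e → (e ∈ M ↔ Even i) := by
  intro i
  induction i with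
  | zero =>
    intro e he
    rw [h0] at he
    have : e₀ = e := Option.some_inj.mp he
    subst this
    simpa using hM
  | succ k ihk =>
    intro e he
    obtain ⟨hlt, hget⟩ := List.getElem?_eq_some_iff.mp he
    have hk : l[k]? = some (l[k]'(by omega)) := List.getElem?_eq_getElem (by omega)
    have ihk' := ihk _ hk
    have hrel : (l[k]'(by omega) ∈ M ↔ e ∉ M) := by
      have h5 := List.isChain_iff_getElem.mp h k (by omega)
      rw [hget] at h5
      exact h5
    have hpar : Even (k+1) ↔ ¬ Even k := Nat.even_add_one
    tauto

private lemma walk_parity (s : V → Prop) (hside : ∀ {x y : V}, G.Adj x y → (s x ↔ ¬ s y)) :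
    ∀ {a b : V} (p : G.Walk a b), ((s a ↔ s b) ↔ Even p.length) := by
  intro a b p
  induction p with
  | nil => simp
  | cons h q ih =>
    have h1 := hside h
    simp only [SimpleGraph.Walk.length_cons, Nat.even_add_one]
    tauto

private lemma peel :
    ∀ (n : ℕ) (M : Set (Sym2 V)) (a b : V) (p : G.Walk a b), p.length ≤ n →
      IsMatchingSet G M → p.IsPath → CriticalVx M a → Alternates M p.edges →
      (p.edges = [] ∨
        ((∃ e, p.edges.head? = some e ∧ e ∉ M) ∧ (∃ e, p.edges.getLast? = some e ∧ e ∈ M))) →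
      ∃ M', IsMatchingSet G M' ∧
        ∀ u, CriticalVx M' u ↔ ((CriticalVx M u ∧ u ≠ a) ∨ u = b) := by
  intro n
  induction n with
  | zero =>
    intro M a b p hlen hM hp ha halt hends
    have hp0 : p.length = 0 := by omega
    have hb : a = b := SimpleGraph.Walk.eq_of_length_eq_zero hp0
    subst hb
    refine ⟨M, hM, fun u => ?_⟩
    constructor
    · intro hu
      by_cases h : u = a
      · exact Or.inr h
      · exact Or.inl ⟨hu, h⟩
    · rintro (⟨hu, _⟩ | rfl)
      · exact hu
      · exact ha
  | succ n ih =>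
    intro M a b p hlen hM hp ha halt hends
    cases p with
    | nil =>
      refine ⟨M, hM, fun u => ?_⟩
      constructor
      · intro hu
        by_cases h : u = a
        · exact Or.inr h
        · exact Or.inl ⟨hu, h⟩
      · rintro (⟨hu, _⟩ | rfl)
        · exact hu
        · exact ha
    | @cons _ x₁ _ h₁ rest =>
      cases rest with
      | nil =>
        rcases hends with hnil | ⟨⟨e, heq, heM⟩, ⟨f, hfq, hfM⟩⟩
        · simp at hnil
        · simp only [SimpleGraph.Walk.edges_cons, SimpleGraph.Walk.edges_nil,
            List.head?_cons, Option.some_inj] at heq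
          have hfq' : s(a, b) = f := by
            simp only [SimpleGraph.Walk.edges_cons, SimpleGraph.Walk.edges_nil] at hfq
            simpa using hfq
          rw [← heq] at heM
          rw [← hfq'] at hfM
          exact absurd hfM heM
      | @cons _ x₂ _ h₂ q =>
        have hedges : (SimpleGraph.Walk.cons h₁ (SimpleGraph.Walk.cons h₂ q)).edges
            = s(a, x₁) :: s(x₁, x₂) :: q.edges := by simp
        rcases hends with hnil | ⟨⟨e, heq, heM⟩, ⟨f, hfq, hfM⟩⟩
        · rw [hedges] at hnil; exact absurd hnil (by simp)
        rw [hedges] at heq hfq halt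
        simp only [List.head?_cons, Option.some_inj] at heq
        rw [← heq] at heM
        have halt' := List.isChain_cons_cons.mp halt
        have he₂M : s(x₁, x₂) ∈ M := by
          have := halt'.1
          by_contra hcon
          tauto
        -- path facts
        have hnodup := (SimpleGraph.Walk.isPath_def _).mp hp
        have hsup : (SimpleGraph.Walk.cons h₁ (SimpleGraph.Walk.cons h₂ q)).support
            = a :: x₁ :: q.support := by simp
        rw [hsup] at hnodup
        have haq : a ∉ q.support := by
          simp only [List.nodup_cons, List.mem_cons] at hnodup; tauto
        have hx₁q : x₁ ∉ q.support := by
          simp only [List.nodup_cons, List.mem_cons] at hnodup; tauto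
        have hax₁ : a ≠ x₁ := h₁.ne
        have hx₁x₂ : x₁ ≠ x₂ := h₂.ne
        have hax₂ : a ≠ x₂ := fun h => haq (h ▸ q.start_mem_support)
        set M₂ : Set (Sym2 V) := insert s(a, x₁) (M \ {s(x₁, x₂)}) with hM₂def
        have hmemM₂ : ∀ f : Sym2 V, f ∈ M₂ ↔ (f = s(a, x₁) ∨ (f ∈ M ∧ f ≠ s(x₁, x₂))) := by
          intro f; simp [hM₂def, Set.mem_insert_iff, Set.mem_diff]
        have he₁M₂ : s(a, x₁) ∈ M₂ := Set.mem_insert _ _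
        have hx₁uniq : ∀ g ∈ M, x₁ ∈ g → g = s(x₁, x₂) :=
          fun g hg hx => hM.2 g hg s(x₁, x₂) he₂M x₁ hx (by simp)
        have hM₂m : IsMatchingSet G M₂ := by
          constructor
          · intro f hf
            rcases (hmemM₂ f).mp hf with rfl | ⟨hfM, _⟩
            · exact G.mem_edgeSet.mpr h₁
            · exact hM.1 f hfM
          · intro f hf g hg u huf hug
            rcases (hmemM₂ f).mp hf with rfl | ⟨hfM, hfne⟩ <;>
              rcases (hmemM₂ g).mp hg with rfl | ⟨hgM, hgne⟩
            · rfl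
            · exfalso
              rcases Sym2.mem_iff.mp huf with rfl | rfl
              · exact ha g hgM hug
              · exact hgne (hx₁uniq g hgM hug)
            · exfalso
              rcases Sym2.mem_iff.mp hug with rfl | rfl
              · exact ha f hfM huf
              · exact hfne (hx₁uniq f hfM huf)
            · exact hM.2 f hfM g hgM u huf hug
        have hcrit₂ : ∀ u, CriticalVx M₂ u ↔ ((CriticalVx M u ∧ u ≠ a) ∨ u = x₂) := by
          intro u
          constructor
          · intro hc
            have hua : u ≠ a := fun h => hc s(a, x₁) he₁M₂ (by rw [h]; simp)
            have hux₁ : u ≠ x₁ := fun h => hc s(a, x₁) he₁M₂ (by rw [h]; simp)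
            by_cases hux₂ : u = x₂
            · exact Or.inr hux₂
            · refine Or.inl ⟨?_, hua⟩
              intro g hg hug
              by_cases hge : g = s(x₁, x₂)
              · subst hge
                rcases Sym2.mem_iff.mp hug with rfl | rfl
                · exact hux₁ rfl
                · exact hux₂ rfl
              · exact hc g ((hmemM₂ g).mpr (Or.inr ⟨hg, hge⟩)) hug
          · rintro (⟨hcu, hua⟩ | hux₂)
            · intro g hgM₂ hug
              rcases (hmemM₂ g).mp hgM₂ with hg1 | ⟨hgM, _⟩
              · subst hg1
                rcases Sym2.mem_iff.mp hug with h | h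
                · exact hua h
                · exact hcu s(x₁, x₂) he₂M (by rw [h]; simp)
              · exact hcu g hgM hug
            · intro g hgM₂ hug
              rcases (hmemM₂ g).mp hgM₂ with hg1 | ⟨hgM, hgne⟩
              · subst hg1
                rw [hux₂] at hug
                rcases Sym2.mem_iff.mp hug with h | h
                · exact hax₂ h.symm
                · exact hx₁x₂ h.symm
              · refine hgne (hM.2 g hgM s(x₁, x₂) he₂M u hug ?_)
                rw [hux₂]; simp
        by_cases hq0 : q.length = 0
        · have hx₂b : x₂ = b := SimpleGraph.Walk.eq_of_length_eq_zero hq0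
          subst hx₂b
          exact ⟨M₂, hM₂m, hcrit₂⟩
        · have hqe : q.edges ≠ [] := by
            intro h
            apply hq0
            have := q.length_edges
            rw [h] at this
            simpa using this.symm
          obtain ⟨e₃, t, hq3⟩ := List.exists_cons_of_ne_nil hqe
          have hchain2 : List.Chain' (fun e f => e ∈ M ↔ f ∉ M) (s(x₁, x₂) :: q.edges) :=
            halt'.2
          rw [hq3] at hchain2
          have hrel23 := (List.isChain_cons_cons.mp hchain2).1
          have he₃M : e₃ ∉ M := by tauto
          have hqchain : Alternates M q.edges := List.IsChain.tail halt'.2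
          have havoid : ∀ f ∈ q.edges, f ≠ s(a, x₁) ∧ f ≠ s(x₁, x₂) := by
            intro f hf
            constructor
            · rintro rfl; exact haq (q.fst_mem_support_of_mem_edges hf)
            · rintro rfl; exact hx₁q (q.fst_mem_support_of_mem_edges hf)
          have hq2 : Alternates M₂ q.edges := by
            refine alt_congr hqchain (fun f hf => ?_)
            have := havoid f hf
            rw [hmemM₂ f]; tauto
          have he₃M₂ : e₃ ∉ M₂ := by
            have h3q : e₃ ∈ q.edges := by rw [hq3]; simp
            have := havoid e₃ h3q
            rw [hmemM₂ e₃]; tauto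
          have hlastq : ∃ f', q.edges.getLast? = some f' ∧ f' ∈ M₂ := by
            have heq2 : (s(a, x₁) :: s(x₁, x₂) :: q.edges).getLast? = q.edges.getLast? := by
              rw [List.getLast?_cons_cons, hq3, List.getLast?_cons_cons, ← hq3]
            rw [heq2] at hfq
            refine ⟨f, hfq, ?_⟩
            have hfmem : f ∈ q.edges := mem_of_getLast?' hfq
            have := havoid f hfmem
            rw [hmemM₂ f]; tauto
          obtain ⟨M', hM', hcrit'⟩ := ih M₂ x₂ b q
            (by
              have hl2 : (SimpleGraph.Walk.cons h₁ (SimpleGraph.Walk.cons h₂ q)).length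
                  = q.length + 2 := by simp
              omega)
            hM₂m (hp.of_cons.of_cons) ((hcrit₂ x₂).mpr (Or.inr rfl)) hq2
            (Or.inr ⟨⟨e₃, by rw [hq3]; simp, he₃M₂⟩, hlastq⟩)
          have hx₂crit : ¬ CriticalVx M x₂ := fun hc => hc s(x₁, x₂) he₂M (by simp)
          refine ⟨M', hM', fun u => ?_⟩
          rw [hcrit' u]
          constructor
          · rintro (⟨hc2, hux₂⟩ | rfl)
            · rcases (hcrit₂ u).mp hc2 with ⟨hcu, hua⟩ | rfl
              · exact Or.inl ⟨hcu, hua⟩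
              · exact absurd rfl hux₂
            · exact Or.inr rfl
          · rintro (⟨hcu, hua⟩ | rfl)
            · refine Or.inl ⟨(hcrit₂ u).mpr (Or.inl ⟨hcu, hua⟩), ?_⟩
              rintro rfl; exact hx₂crit hcu
            · exact Or.inr rfl

private lemma surgery (s : V → Prop) (hside : ∀ {x y : V}, G.Adj x y → (s x ↔ ¬ s y))
    (M : Set (Sym2 V)) (c : Prop) :
    ∀ (n : ℕ) (v w : V), v ≠ w → ∀ (p : G.Walk v w), p.length ≤ n →
      Alternates M p.edges → (∃ e, p.edges.head? = some e ∧ e ∈ M) →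
      (∃ e, p.edges.getLast? = some e ∧ (e ∈ M ↔ c)) →
      ∃ q : G.Walk v w, q.IsPath ∧ Alternates M q.edges ∧
        (∃ e, q.edges.head? = some e ∧ e ∈ M) ∧
        (∃ e, q.edges.getLast? = some e ∧ (e ∈ M ↔ c)) := by
  intro n
  induction n with
  | zero =>
    intro v w hvw p hlen _ _ _
    have h0 : p.length = 0 := by omega
    exact absurd (SimpleGraph.Walk.eq_of_length_eq_zero h0) hvw
  | succ n ih =>
    intro v w hvw p hlen halt hhead hlast
    by_cases hp : p.IsPath
    · exact ⟨p, hp, halt, hhead, hlast⟩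
    classical
    have hnodup : ¬ p.support.Nodup := fun h => hp ((SimpleGraph.Walk.isPath_def p).mpr h)
    obtain ⟨u, hu2⟩ : ∃ u, 1 < p.support.count u := by
      by_contra h
      push_neg at h
      exact hnodup (List.nodup_iff_count_le_one.mpr h)
    have hu : u ∈ p.support := List.count_pos_iff.mp (by omega)
    set q₁ := p.takeUntil u hu with hq₁def
    set q₂ := p.dropUntil u hu with hq₂def
    have hspec : q₁.append q₂ = p := p.take_spec hu
    have hc1 : q₁.support.count u = 1 := p.count_support_takeUntil_eq_one hu
    have hsupp : p.support = q₁.support ++ q₂.support.tail := by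
      rw [← hspec]; exact SimpleGraph.Walk.support_append _ _
    have hutail : u ∈ q₂.support.tail := by
      rw [hsupp, List.count_append, hc1] at hu2
      exact List.count_pos_iff.mp (by omega)
    have hcq₂ : 1 < q₂.support.count u := by
      rw [q₂.support_eq_cons, List.count_cons_self]
      have := List.count_pos_iff.mpr hutail
      omega
    have hu2' : u ∈ q₂.reverse.support := by
      rw [SimpleGraph.Walk.support_reverse, List.mem_reverse]
      exact q₂.start_mem_support
    set t := q₂.reverse.takeUntil u hu2' with htdef
    set d := q₂.reverse.dropUntil u hu2' with hddef
    have hspec2 : t.append d = q₂.reverse := q₂.reverse.take_spec hu2'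
    set r := t.reverse with hrdef
    have hq₂eq : q₂ = d.reverse.append r := by
      have h1 := congrArg SimpleGraph.Walk.reverse hspec2
      rw [SimpleGraph.Walk.reverse_append, SimpleGraph.Walk.reverse_reverse] at h1
      exact h1.symm
    have hpeq : p = (q₁.append d.reverse).append r := by
      rw [← hspec, hq₂eq]
      exact SimpleGraph.Walk.append_assoc _ _ _
    have hdne : d.length ≠ 0 := by
      intro h0
      have hdr : d.support.tail = [] := by
        have hl := d.length_support
        cases hds : d.support with
        | nil => simp
        | cons aa ll =>
          rw [hds] at hl
          simp only [List.length_cons, h0] at hl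
          have : ll.length = 0 := by omega
          simp [List.length_eq_zero_iff.mp this]
      have hcrev : q₂.reverse.support.count u = 1 := by
        have hsp : q₂.reverse.support = t.support ++ d.support.tail := by
          rw [← hspec2]; exact SimpleGraph.Walk.support_append _ _
        rw [hsp, hdr, List.append_nil]
        exact q₂.reverse.count_support_takeUntil_eq_one hu2'
      rw [SimpleGraph.Walk.support_reverse, List.count_reverse] at hcrev
      omega
    have hdeven : Even d.length := (walk_parity s hside d).mp Iff.rfl
    have hpar : ∀ m : ℕ, (Even (m + d.length) ↔ Even m) := fun m => by
      simp [Nat.even_add, hdeven]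
    have hlen_p : p.length = (q₁.length + d.length) + r.length := by
      rw [hpeq, SimpleGraph.Walk.length_append, SimpleGraph.Walk.length_append,
        SimpleGraph.Walk.length_reverse]
    have hedq : p.edges = (q₁.edges ++ d.reverse.edges) ++ r.edges := by
      rw [hpeq, SimpleGraph.Walk.edges_append, SimpleGraph.Walk.edges_append]
    set L₁ := q₁.edges with hL₁def
    set L₂ := d.reverse.edges with hL₂def
    set L₃ := r.edges with hL₃def
    have hL₁len : L₁.length = q₁.length := q₁.length_edges
    have hL₂len : L₂.length = d.length := by
      rw [hL₂def, d.reverse.length_edges, SimpleGraph.Walk.length_reverse]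
    have hL₃len : L₃.length = r.length := r.length_edges
    rw [hedq] at halt hhead hlast
    have h0some : ∃ e₀, ((L₁ ++ L₂) ++ L₃)[0]? = some e₀ ∧ e₀ ∈ M := by
      obtain ⟨e, he1, he2⟩ := hhead
      exact ⟨e, (List.head?_eq_getElem? (l := (L₁ ++ L₂) ++ L₃)).symm.trans he1, he2⟩
    obtain ⟨e₀, h0, h0M⟩ := h0some
    have AE := alt_even' halt h0 h0M
    have hgetA : ∀ (i : ℕ) (e : Sym2 V), L₁[i]? = some e → (e ∈ M ↔ Even i) := by
      intro i e he
      have hi : i < L₁.length := (List.getElem?_eq_some_iff.mp he).1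
      refine AE i e ?_
      exact (List.getElem?_append_left (by simp; omega)).trans
        ((List.getElem?_append_left hi).trans he)
    have hgetB : ∀ e : Sym2 V, L₃[0]? = some e → (e ∈ M ↔ Even q₁.length) := by
      intro e he
      have h1 : ((L₁ ++ L₂) ++ L₃)[(L₁ ++ L₂).length]? = some e :=
        (List.getElem?_append_right (le_refl _)).trans (by simpa using he)
      have h2 := AE _ e h1
      rw [h2, List.length_append, hL₁len, hL₂len]
      exact hpar q₁.length
    have hchain₁ : Alternates M L₁ :=
      List.IsChain.prefix halt ⟨L₂ ++ L₃, (List.append_assoc _ _ _).symm⟩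
    have hchain₃ : Alternates M L₃ := List.IsChain.suffix halt ⟨L₁ ++ L₂, rfl⟩
    have hlastA : ∀ x : Sym2 V, L₁.getLast? = some x → (x ∈ M ↔ ¬ Even q₁.length) := by
      intro x hx
      have hne : L₁ ≠ [] := by rintro h; rw [h] at hx; simp at hx
      have hpos : 0 < L₁.length := List.length_pos_iff.mpr hne
      have hx' : L₁[L₁.length - 1]? = some x :=
        (List.getLast?_eq_getElem? (l := L₁)).symm.trans hx
      have h1 := hgetA _ x hx'
      have h2 : L₁.length - 1 + 1 = q₁.length := by omega
      have h3 := Nat.even_add_one (n := L₁.length - 1)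
      rw [h2] at h3
      rw [h1, h3]
      exact not_not.symm
    have hjunction : ∀ x ∈ L₁.getLast?, ∀ y ∈ L₃.head?, (x ∈ M ↔ y ∉ M) := by
      intro x hx y hy
      have hx' : L₁.getLast? = some x := Option.mem_def.mp hx
      have hy' : L₃[0]? = some y :=
        (List.head?_eq_getElem? (l := L₃)).symm.trans (Option.mem_def.mp hy)
      have h1 := hlastA x hx'
      have h2 := hgetB y hy'
      rw [h1, h2]
    have haltnew : Alternates M (L₁ ++ L₃) :=
      List.isChain_append.mpr ⟨hchain₁, hchain₃, hjunction⟩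
    have hq'pos : q₁.length + r.length ≠ 0 := by
      intro h0'
      have hq10 : q₁.length = 0 := by omega
      have hr0 : r.length = 0 := by omega
      have h1 : v = u := SimpleGraph.Walk.eq_of_length_eq_zero hq10
      have h2 : u = w := SimpleGraph.Walk.eq_of_length_eq_zero hr0
      exact hvw (h1.trans h2)
    have hheadnew : ∃ e, (L₁ ++ L₃).head? = some e ∧ e ∈ M := by
      by_cases hL₁ne : L₁ = []
      · have hq₁0 : q₁.length = 0 := by rw [← hL₁len, hL₁ne]; rfl
        have hL₃ne : L₃ ≠ [] := by
          intro h
          apply hq'pos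
          have : L₃.length = 0 := by rw [h]; rfl
          omega
        refine ⟨L₃.head hL₃ne, ?_, ?_⟩
        · rw [hL₁ne, List.nil_append]
          exact List.head?_eq_head hL₃ne
        · have : L₃[0]? = some (L₃.head hL₃ne) :=
            (List.head?_eq_getElem? (l := L₃)).symm.trans (List.head?_eq_head hL₃ne)
          rw [hgetB _ this, hq₁0]
          exact Even.zero
      · obtain ⟨e, he1, he2⟩ := hhead
        refine ⟨e, ?_, he2⟩
        rw [List.head?_append_of_ne_nil _ hL₁ne]
        rw [List.head?_append_of_ne_nil _ (by simp [hL₁ne]),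
          List.head?_append_of_ne_nil _ hL₁ne] at he1
        exact he1
    have hlastnew : ∃ e, (L₁ ++ L₃).getLast? = some e ∧ (e ∈ M ↔ c) := by
      by_cases hL₃ne : L₃ = []
      · have hr0 : r.length = 0 := by rw [← hL₃len, hL₃ne]; rfl
        have hL₁ne : L₁ ≠ [] := by
          intro h
          apply hq'pos
          have : L₁.length = 0 := by rw [h]; rfl
          omega
        obtain ⟨e, he1, he2⟩ := hlast
        have he1' : (L₁ ++ L₂).getLast? = some e := by
          rw [hL₃ne, List.append_nil] at he1
          exact he1
        have hL₂ne : L₂ ≠ [] := by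
          intro h
          apply hdne
          rw [← hL₂len, h]; rfl
        have heL₂ : L₂.getLast? = some e := by
          rw [List.getLast?_append_of_ne_nil _ hL₂ne] at he1'
          exact he1'
        -- e ∈ M ↔ Even ((L₁++L₂).length - 1)
        have hLpos : 0 < (L₁ ++ L₂).length := by
          rw [List.length_append]
          have := List.length_pos_iff.mpr hL₁ne
          omega
        have heIdx : ((L₁ ++ L₂) ++ L₃)[(L₁ ++ L₂).length - 1]? = some e :=
          (List.getElem?_append_left (by omega)).trans
            ((List.getLast?_eq_getElem? (l := L₁ ++ L₂)).symm.trans he1')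
        have heM := AE _ e heIdx
        have hxlast := hlastA (L₁.getLast hL₁ne) (List.getLast?_eq_getLast_of_ne_nil hL₁ne)
        refine ⟨L₁.getLast hL₁ne, ?_, ?_⟩
        · rw [hL₃ne, List.append_nil]
          exact List.getLast?_eq_getLast_of_ne_nil hL₁ne
        · -- Even ((L₁++L₂).length - 1) ↔ ¬ Even q₁.length relation
          have hL₁pos : 0 < L₁.length := List.length_pos_iff.mpr hL₁ne
          have harith : (L₁ ++ L₂).length - 1 = (q₁.length - 1) + d.length := by
            rw [List.length_append, hL₁len, hL₂len]; omega
          have hpar2 := hpar (q₁.length - 1)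
          rw [harith] at heM
          have h3 := Nat.even_add_one (n := q₁.length - 1)
          have h4 : q₁.length - 1 + 1 = q₁.length := by omega
          rw [h4] at h3
          rw [hxlast, ← he2, heM, hpar2, h3]
          exact not_not
      · obtain ⟨e, he1, he2⟩ := hlast
        refine ⟨e, ?_, he2⟩
        rw [List.getLast?_append_of_ne_nil _ hL₃ne]
        rw [List.getLast?_append_of_ne_nil _ hL₃ne] at he1
        exact he1
    have hlen' : (q₁.append r).length ≤ n := by
      have h1 : (q₁.append r).length = q₁.length + r.length :=
        SimpleGraph.Walk.length_append _ _
      omega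
    have hedges' : (q₁.append r).edges = L₁ ++ L₃ := SimpleGraph.Walk.edges_append _ _
    exact ih v w hvw (q₁.append r) hlen' (by rw [hedges']; exact haltnew)
      (by rw [hedges']; exact hheadnew) (by rw [hedges']; exact hlastnew)

private lemma peel_last {M : Set (Sym2 V)} (hM : IsMatchingSet G M)
    (hnc : ∀ u, ¬ CriticalVx M u) {w v : V} (rp : G.Walk w v) (hwv : w ≠ v)
    (hpath : rp.IsPath) (halt : Alternates M rp.edges)
    (hhead : ∃ e, rp.edges.head? = some e ∧ e ∈ M)
    (hlast : ∃ e, rp.edges.getLast? = some e ∧ e ∈ M) :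
    ∃ M', IsMatchingSet G M' ∧ ∀ u, CriticalVx M' u ↔ (u = v ∨ u = w) := by
  cases rp with
  | nil => exact absurd rfl hwv
  | @cons _ x _ h rest =>
    have hedges : (SimpleGraph.Walk.cons h rest).edges = s(w, x) :: rest.edges := by simp
    rw [hedges] at halt hhead hlast
    obtain ⟨e, he1, he2⟩ := hhead
    simp only [List.head?_cons, Option.some_inj] at he1
    rw [← he1] at he2
    set M₂ : Set (Sym2 V) := M \ {s(w, x)} with hM₂def
    have hM₂m : IsMatchingSet G M₂ :=
      ⟨fun f hf => hM.1 f hf.1, fun f hf g hg => hM.2 f hf.1 g hg.1⟩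
    have hwx : w ≠ x := h.ne
    have hcrit₂ : ∀ u, CriticalVx M₂ u ↔ (u = w ∨ u = x) := by
      intro u
      constructor
      · intro hc
        by_contra hn
        push_neg at hn
        have hne : u ∉ s(w, x) := by
          rw [Sym2.mem_iff]
          tauto
        have h2 := hnc u
        unfold CriticalVx at h2
        push_neg at h2
        obtain ⟨g, hg, hug⟩ := h2
        have hge : g ≠ s(w, x) := fun hh => hne (hh ▸ hug)
        exact hc g ⟨hg, hge⟩ hug
      · intro hu g hg hug
        have humem : u ∈ s(w, x) := by rcases hu with rfl | rfl <;> simp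
        have := hM.2 g hg.1 _ he2 u hug humem
        exact hg.2 this
    by_cases hr0 : rest.length = 0
    · have hxv := SimpleGraph.Walk.eq_of_length_eq_zero hr0
      subst hxv
      exact ⟨M₂, hM₂m, fun u => by rw [hcrit₂ u]; tauto⟩
    · have hre : rest.edges ≠ [] := by
        intro hh
        apply hr0
        have := rest.length_edges
        rw [hh] at this
        simpa using this.symm
      obtain ⟨e₂, t, h2⟩ := List.exists_cons_of_ne_nil hre
      have hwsup : w ∉ rest.support := by
        have hnd := (SimpleGraph.Walk.isPath_def _).mp hpath
        simp only [SimpleGraph.Walk.support_cons, List.nodup_cons] at hnd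
        exact hnd.1
      have havoid : ∀ f ∈ rest.edges, f ≠ s(w, x) := by
        rintro f hf rfl
        exact hwsup (rest.fst_mem_support_of_mem_edges hf)
      have hrestalt : Alternates M₂ rest.edges := by
        refine alt_congr (List.IsChain.tail halt) (fun f hf => ?_)
        simp only [hM₂def, Set.mem_diff, Set.mem_singleton_iff]
        exact ⟨fun hm => ⟨hm, havoid f hf⟩, And.left⟩
      have hheadrest : ∃ e', rest.edges.head? = some e' ∧ e' ∉ M₂ := by
        have halt2 : List.Chain' (fun e f => e ∈ M ↔ f ∉ M) (s(w, x) :: e₂ :: t) := by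
          rw [← h2]; exact halt
        have hrel := (List.isChain_cons_cons.mp halt2).1
        have he₂M : e₂ ∉ M := by tauto
        exact ⟨e₂, by rw [h2]; simp, fun hm => he₂M hm.1⟩
      have hlastrest : ∃ e', rest.edges.getLast? = some e' ∧ e' ∈ M₂ := by
        obtain ⟨f, hf1, hf2⟩ := hlast
        rw [h2, List.getLast?_cons_cons, ← h2] at hf1
        have hfm : f ∈ rest.edges := mem_of_getLast?' hf1
        exact ⟨f, hf1, ⟨hf2, by simpa using havoid f hfm⟩⟩
      obtain ⟨M', hM', hcrit'⟩ := peel rest.length M₂ x v rest le_rfl hM₂m hpath.of_cons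
        ((hcrit₂ x).mpr (Or.inr rfl)) hrestalt (Or.inr ⟨hheadrest, hlastrest⟩)
      refine ⟨M', hM', fun u => ?_⟩
      rw [hcrit' u]
      constructor
      · rintro (⟨hc2, hux⟩ | rfl)
        · rcases (hcrit₂ u).mp hc2 with rfl | rfl
          · exact Or.inr rfl
          · exact absurd rfl hux
        · exact Or.inl rfl
      · rintro (rfl | rfl)
        · exact Or.inr rfl
        · exact Or.inl ⟨(hcrit₂ u).mpr (Or.inl rfl), fun hh => hwx hh⟩

private lemma card_core {V : Type*} [Fintype V] {G : SimpleGraph V} {A B : Set V}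
    (hdisj : ∀ v, ¬(v ∈ A ∧ v ∈ B))
    (hbip : ∀ u v, G.Adj u v → ((u ∈ A ∧ v ∈ B) ∨ (u ∈ B ∧ v ∈ A)))
    {M : Set (Sym2 V)} (hM : IsMatchingSet G M)
    (hB : ∀ b ∈ B, ¬ CriticalVx M b) :
    {a | a ∈ A ∧ ¬ CriticalVx M a}.ncard = B.ncard := by
  classical
  set S : Set V := {a | a ∈ A ∧ ¬ CriticalVx M a} with hS
  have hex : ∀ u : V, ¬ CriticalVx M u → ∃ e, e ∈ M ∧ u ∈ e := by
    intro u hu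
    unfold CriticalVx at hu
    push_neg at hu
    exact hu
  let f : V → V := fun u =>
    if h : ∃ e, e ∈ M ∧ u ∈ e then Sym2.Mem.other h.choose_spec.2 else u
  have hf : ∀ u, ¬ CriticalVx M u → s(u, f u) ∈ M := by
    intro u hu
    have h := hex u hu
    simp only [f, dif_pos h]
    rw [Sym2.other_spec h.choose_spec.2]
    exact h.choose_spec.1
  have hadj : ∀ u, ¬ CriticalVx M u → G.Adj u (f u) := fun u hu =>
    G.mem_edgeSet.mp (hM.1 _ (hf u hu))
  have huniq : ∀ (u x y : V), s(u, x) ∈ M → s(u, y) ∈ M → x = y := by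
    intro u x y hx hy
    have := hM.2 _ hx _ hy u (by simp) (by simp)
    exact Sym2.congr_right.mp this
  have hbij : Set.BijOn f S B := by
    refine ⟨?_, ?_, ?_⟩
    · rintro a ⟨haA, hac⟩
      rcases hbip a (f a) (hadj a hac) with ⟨_, h2⟩ | ⟨h1, _⟩
      · exact h2
      · exact absurd ⟨haA, h1⟩ (hdisj a)
    · rintro a₁ ⟨_, h₁⟩ a₂ ⟨_, h₂⟩ heq
      have m₁ := hf a₁ h₁
      have m₂ := hf a₂ h₂
      rw [heq] at m₁
      have hequ := hM.2 _ m₁ _ m₂ (f a₂) (by simp) (by simp)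
      have h3 : a₁ ∈ s(a₂, f a₂) := hequ ▸ (by simp : a₁ ∈ s(a₁, f a₂))
      rcases Sym2.mem_iff.mp h3 with hh | hh
      · exact hh
      · exact absurd (hh.trans heq.symm) (hadj a₁ h₁).ne
    · intro b hb
      have hbc := hB b hb
      have hadjb := hadj b hbc
      have hfbA : f b ∈ A := by
        rcases hbip b (f b) hadjb with ⟨h1, _⟩ | ⟨_, h2⟩
        · exact (hdisj b ⟨h1, hb⟩).elim
        · exact h2
      have hfbc : ¬ CriticalVx M (f b) := fun hc => hc s(b, f b) (hf b hbc) (by simp)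
      refine ⟨f b, ⟨hfbA, hfbc⟩, ?_⟩
      have m₁ := hf (f b) hfbc
      have m₂ : s(f b, b) ∈ M := by rw [Sym2.eq_swap]; exact hf b hbc
      exact huniq (f b) _ _ m₁ m₂
  calc S.ncard = (f '' S).ncard := (Set.ncard_image_of_injOn hbij.injOn).symm
    _ = B.ncard := by rw [hbij.image_eq]

end Statement16Aux

/-- Sufficient conditions, via systems of semi-augmenting (resp. non-augmenting) paths,
for a bipartite graph to be conducting of the first (resp. second) type. -/
theorem statement16 {V : Type*} [Fintype V] (G : SimpleGraph V) (A B : Set V)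
    (hcover : ∀ v, v ∈ A ∨ v ∈ B) (hdisj : ∀ v, ¬(v ∈ A ∧ v ∈ B))
    (hbip : ∀ u v, G.Adj u v → ((u ∈ A ∧ v ∈ B) ∨ (u ∈ B ∧ v ∈ A))) :
    ((∃ (M : Set (Sym2 V)) (v : V), v ∈ A ∧ IsMatchingSet G M ∧
        (∀ u, CriticalVx M u ↔ u = v) ∧
        ∀ w ∈ A, w ≠ v → ∃ p : G.Walk w v, IsSemiAugmenting M p) →
      ConductingFirst G A B) ∧
    ((∃ M : Set (Sym2 V), IsMatchingSet G M ∧ (∀ u, ¬ CriticalVx M u) ∧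
        ∀ v ∈ A, ∀ w ∈ B, ∃ p : G.Walk v w, IsNonAugmenting M p) →
      ConductingSecond G A B) := by
  classical
  have hside : ∀ {x y : V}, G.Adj x y → ((x ∈ A) ↔ ¬ (y ∈ A)) := by
    intro x y hxy
    rcases hbip x y hxy with ⟨h1, h2⟩ | ⟨h1, h2⟩
    · constructor
      · intro _ hy; exact hdisj y ⟨hy, h2⟩
      · intro _; exact h1
    · constructor
      · intro hx; exact absurd ⟨hx, h1⟩ (hdisj x)
      · intro hny; exact (hny h2).elim
  constructor
  · rintro ⟨M, v, hvA, hM, hcrit, hpaths⟩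
    have hSeq : {a | a ∈ A ∧ ¬ CriticalVx M a} = A \ {v} := by
      ext a
      simp [hcrit a]
    have hBnc : ∀ b ∈ B, ¬ CriticalVx M b := by
      intro b hb hc
      have hbv := (hcrit b).mp hc
      exact hdisj v ⟨hvA, hbv ▸ hb⟩
    have hcard := card_core hdisj hbip hM hBnc
    rw [hSeq] at hcard
    constructor
    · rw [← hcard]
      exact (Set.ncard_diff_singleton_add_one hvA (Set.toFinite A)).symm
    · intro w hwA
      by_cases hwv : w = v
      · exact ⟨M, hM, fun u => by rw [hcrit u, hwv]⟩
      · obtain ⟨p, hsa⟩ := hpaths w hwA hwv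
        obtain ⟨⟨haltp, _, _⟩, ⟨e, hh, heM⟩, ⟨e', hl, he'M⟩⟩ := hsa
        obtain ⟨q, hqpath, hqalt, hqhead, hqlast⟩ :=
          surgery (· ∈ A) hside M False p.length w v hwv p le_rfl haltp
            ⟨e, hh, heM⟩ ⟨e', hl, iff_false_intro he'M⟩
        have hrev_alt : Alternates M q.reverse.edges := by
          rw [SimpleGraph.Walk.edges_reverse]
          exact List.isChain_reverse.mpr (List.IsChain.imp (fun a b hab => show _ ∈ M ↔ _ ∉ M by tauto) hqalt)
        have hrev_head : ∃ e, q.reverse.edges.head? = some e ∧ e ∉ M := by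
          obtain ⟨f, hf1, hf2⟩ := hqlast
          exact ⟨f, by rw [SimpleGraph.Walk.edges_reverse, List.head?_reverse]; exact hf1,
            fun hmem => hf2.mp hmem⟩
        have hrev_last : ∃ e, q.reverse.edges.getLast? = some e ∧ e ∈ M := by
          obtain ⟨f, hf1, hf2⟩ := hqhead
          exact ⟨f, by rw [SimpleGraph.Walk.edges_reverse, List.getLast?_reverse]; exact hf1, hf2⟩
        obtain ⟨M', hM', hcrit'⟩ := peel q.reverse.length M v w q.reverse le_rfl hM
          hqpath.reverse ((hcrit v).mpr rfl) hrev_alt (Or.inr ⟨hrev_head, hrev_last⟩)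
        refine ⟨M', hM', fun u => ?_⟩
        rw [hcrit' u]
        constructor
        · rintro (⟨hc, hne⟩ | rfl)
          · exact absurd ((hcrit u).mp hc) hne
          · rfl
        · rintro rfl
          exact Or.inr rfl
  · rintro ⟨M, hM, hnc, hpaths⟩
    have hSeq : {a | a ∈ A ∧ ¬ CriticalVx M a} = A := by
      ext a
      simp [hnc a]
    have hcard := card_core hdisj hbip hM (fun b _ => hnc b)
    rw [hSeq] at hcard
    refine ⟨hcard, ?_⟩
    intro v hvA w hwB
    have hvw : v ≠ w := fun hh => hdisj v ⟨hvA, hh ▸ hwB⟩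
    obtain ⟨p, hna⟩ := hpaths v hvA w hwB
    obtain ⟨haltp, ⟨e, hh, heM⟩, ⟨e', hl, he'M⟩⟩ := hna
    obtain ⟨q, hqpath, hqalt, hqhead, hqlast⟩ :=
      surgery (· ∈ A) hside M True p.length v w hvw p le_rfl haltp
        ⟨e, hh, heM⟩ ⟨e', hl, iff_true_intro he'M⟩
    have hrev_alt : Alternates M q.reverse.edges := by
      rw [SimpleGraph.Walk.edges_reverse]
      exact List.isChain_reverse.mpr (List.IsChain.imp (fun a b hab => show _ ∈ M ↔ _ ∉ M by tauto) hqalt)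
    have hrev_head : ∃ f, q.reverse.edges.head? = some f ∧ f ∈ M := by
      obtain ⟨f, hf1, hf2⟩ := hqlast
      exact ⟨f, by rw [SimpleGraph.Walk.edges_reverse, List.head?_reverse]; exact hf1,
        hf2.mpr trivial⟩
    have hrev_last : ∃ f, q.reverse.edges.getLast? = some f ∧ f ∈ M := by
      obtain ⟨f, hf1, hf2⟩ := hqhead
      exact ⟨f, by rw [SimpleGraph.Walk.edges_reverse, List.getLast?_reverse]; exact hf1, hf2⟩
    exact peel_last hM hnc q.reverse hvw.symm hqpath.reverse hrev_alt hrev_head hrev_last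
end
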